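/- arXiv:2407.08360 — 5 statements merged into one kernel-verified Lean document; each statement's English description precedes it below -/
import Mathlib

section
/- Let a, b, c ∈ ℤ and suppose there exists a prime p such that none of the integers ac, bc, (a+b)c is a quadratic residue modulo p. Then the equation a x^2 + b y^2 = c z^2 is not partition regular with respect to (x, y): there exists a coloring of the positive integers with finitely many colors such that there are no distinct positive integers x, y of the same color and positive integer z with a x^2 + b y^2 = c z^2. -/
private lemma sq_from_eq (p : ℕ) [Fact p.Prime] (K U R : ZMod p) (hU : U ≠ 0)
    (h : K * U ^ 2 = R ^ 2) : ∃ s : ZMod p, s ^ 2 = K :=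
  ⟨R * U⁻¹, by rw [mul_pow, ← h, inv_pow, mul_inv_cancel_right₀ (pow_ne_zero 2 hU)]⟩

private lemma key (a b c : ℤ) (p : ℕ) (hp : p.Prime)
    (h1 : ¬ ∃ s : ZMod p, s ^ 2 = ((a * c : ℤ) : ZMod p))
    (h3 : ¬ ∃ s : ZMod p, s ^ 2 = (((a + b) * c : ℤ) : ZMod p))
    (x y z : ℕ) (hx : 0 < x) (hy : 0 < y) (hz : 0 < z)
    (hle : x.factorization p ≤ y.factorization p)
    (hcol : ((x / p ^ x.factorization p : ℕ) : ZMod p) = ((y / p ^ y.factorization p : ℕ) : ZMod p))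
    (heq : a * (x : ℤ) ^ 2 + b * (y : ℤ) ^ 2 = c * (z : ℤ) ^ 2) : False := by
  haveI := Fact.mk hp
  haveI : NeZero p := ⟨hp.ne_zero⟩
  have hc : c ≠ 0 := by
    rintro rfl
    exact h1 ⟨0, by simp⟩
  set α := x.factorization p with hα
  set β := y.factorization p with hβ
  set u := x / p ^ α with hu
  set w := y / p ^ β with hw
  have hxe : (p : ℕ) ^ α * u = x := Nat.ordProj_mul_ordCompl_eq_self x p
  have hye : (p : ℕ) ^ β * w = y := Nat.ordProj_mul_ordCompl_eq_self y p
  have hpu : ¬ p ∣ u := Nat.not_dvd_ordCompl hp hx.ne'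
  have hpw : ¬ p ∣ w := Nat.not_dvd_ordCompl hp hy.ne'
  set m := (c * z).natAbs with hm
  have hm0 : m ≠ 0 := by
    simp [hm, Int.natAbs_eq_zero, hc, hz.ne']
  set γ := m.factorization p with hγ
  set t := m / p ^ γ with ht
  have hme : (p : ℕ) ^ γ * t = m := Nat.ordProj_mul_ordCompl_eq_self m p
  have hpt : ¬ p ∣ t := Nat.not_dvd_ordCompl hp hm0
  -- main integer equation
  have hE : a * c * (x : ℤ) ^ 2 + b * c * (y : ℤ) ^ 2 = (m : ℤ) ^ 2 := by
    have : ((m : ℤ)) ^ 2 = (c * z) ^ 2 := by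
      rw [hm]; exact_mod_cast Int.natAbs_sq (c * z)
    rw [this]; linear_combination c * heq
  -- substitute
  have hE2 : a * c * ((p : ℤ) ^ (2 * α) * (u : ℤ) ^ 2) + b * c * ((p : ℤ) ^ (2 * β) * (w : ℤ) ^ 2)
      = (p : ℤ) ^ (2 * γ) * (t : ℤ) ^ 2 := by
    rw [← hxe, ← hye, ← hme] at hE
    push_cast at hE
    linear_combination hE
  -- γ ≥ α
  have hαγ : α ≤ γ := by
    have hdvd : (p : ℤ) ^ (2 * α) ∣ (m : ℤ) ^ 2 := by
      rw [← hE]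
      apply dvd_add
      · rw [← hxe]; push_cast
        refine Dvd.dvd.mul_left ?_ _
        rw [mul_pow, ← pow_mul, mul_comm α 2]
        exact Dvd.dvd.mul_right dvd_rfl _
      · rw [← hye]; push_cast
        refine Dvd.dvd.mul_left ?_ _
        rw [mul_pow, ← pow_mul, mul_comm β 2]
        exact dvd_mul_of_dvd_left (pow_dvd_pow _ (by omega)) _
    have hdvd' : p ^ (2 * α) ∣ m ^ 2 := by exact_mod_cast hdvd
    have := (Nat.Prime.pow_dvd_iff_le_factorization hp (pow_ne_zero 2 hm0)).mp hdvd'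
    rw [Nat.factorization_pow] at this
    simp only [Finsupp.smul_apply, smul_eq_mul, ← hγ] at this
    omega
  -- divide by p^(2α)
  have hE3 : a * c * (u : ℤ) ^ 2 + b * c * (p : ℤ) ^ (2 * (β - α)) * (w : ℤ) ^ 2
      = (p : ℤ) ^ (2 * (γ - α)) * (t : ℤ) ^ 2 := by
    have hp0 : ((p : ℤ) ^ (2 * α)) ≠ 0 := pow_ne_zero _ (by exact_mod_cast hp.ne_zero)
    apply mul_left_cancel₀ hp0
    have e1 : (p : ℤ) ^ (2 * α) * ((p : ℤ) ^ (2 * (β - α))) = (p : ℤ) ^ (2 * β) := by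
      rw [← pow_add]; congr 1; omega
    have e2 : (p : ℤ) ^ (2 * α) * ((p : ℤ) ^ (2 * (γ - α))) = (p : ℤ) ^ (2 * γ) := by
      rw [← pow_add]; congr 1; omega
    linear_combination hE2 + (b * c * (w : ℤ) ^ 2) * e1 - (t : ℤ) ^ 2 * e2
  -- reduce mod p
  have hU : ((u : ℕ) : ZMod p) ≠ 0 := by
    rwa [Ne, ZMod.natCast_eq_zero_iff]
  have hT : ((t : ℕ) : ZMod p) ≠ 0 := by
    rwa [Ne, ZMod.natCast_eq_zero_iff]
  have hZ : ((a * c : ℤ) : ZMod p) * ((u : ℕ) : ZMod p) ^ 2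
      + ((b * c : ℤ) : ZMod p) * ((p : ZMod p)) ^ (2 * (β - α)) * ((w : ℕ) : ZMod p) ^ 2
      = ((p : ZMod p)) ^ (2 * (γ - α)) * ((t : ℕ) : ZMod p) ^ 2 := by
    have := congrArg (fun n : ℤ => (n : ZMod p)) hE3
    push_cast at this ⊢
    convert this using 2
  rw [ZMod.natCast_self] at hZ
  rw [← hcol] at hZ
  have hcast : (((a + b) * c : ℤ) : ZMod p) = ((a * c : ℤ) : ZMod p) + ((b * c : ℤ) : ZMod p) := by
    push_cast; ring
  rcases eq_or_lt_of_le hle with hbe | hbl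
  · rw [← hbe, Nat.sub_self, mul_zero, pow_zero, mul_one] at hZ
    rcases eq_or_lt_of_le hαγ with hge | hgl
    · rw [← hge, Nat.sub_self, mul_zero, pow_zero, one_mul] at hZ
      exact h3 (sq_from_eq p _ ((u : ℕ) : ZMod p) ((t : ℕ) : ZMod p) hU (by rw [hcast]; linear_combination hZ))
    · rw [zero_pow (by omega : 2 * (γ - α) ≠ 0), zero_mul] at hZ
      refine h3 ⟨0, ?_⟩
      have h0 : (((a + b) * c : ℤ) : ZMod p) * ((u : ℕ) : ZMod p) ^ 2 = 0 := by
        rw [hcast]; linear_combination hZ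
      have := (mul_eq_zero.mp h0).resolve_right (pow_ne_zero 2 hU)
      rw [this]; ring
  · rw [zero_pow (by omega : 2 * (β - α) ≠ 0), mul_zero, zero_mul, add_zero] at hZ
    rcases eq_or_lt_of_le hαγ with hge | hgl
    · rw [← hge, Nat.sub_self, mul_zero, pow_zero, one_mul] at hZ
      exact h1 (sq_from_eq p _ ((u : ℕ) : ZMod p) ((t : ℕ) : ZMod p) hU hZ)
    · rw [zero_pow (by omega : 2 * (γ - α) ≠ 0), zero_mul] at hZ
      refine h1 ⟨0, ?_⟩
      have := (mul_eq_zero.mp hZ).resolve_right (pow_ne_zero 2 hU)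
      rw [this]; ring

theorem stmt15 (a b c : ℤ) (p : ℕ) (hp : p.Prime)
    (h1 : ¬ ∃ x : ZMod p, x ^ 2 = ((a * c : ℤ) : ZMod p))
    (h2 : ¬ ∃ x : ZMod p, x ^ 2 = ((b * c : ℤ) : ZMod p))
    (h3 : ¬ ∃ x : ZMod p, x ^ 2 = (((a + b) * c : ℤ) : ZMod p)) :
    ∃ (r : ℕ) (col : ℕ → Fin r),
      ¬ ∃ x y z : ℕ, 0 < x ∧ 0 < y ∧ 0 < z ∧ x ≠ y ∧ col x = col y ∧
        a * (x : ℤ) ^ 2 + b * (y : ℤ) ^ 2 = c * (z : ℤ) ^ 2 := by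
  refine ⟨p, fun n => ⟨(n / p ^ n.factorization p) % p, Nat.mod_lt _ hp.pos⟩, ?_⟩
  rintro ⟨x, y, z, hx, hy, hz, hne, hcol, heq⟩
  simp only [Fin.mk.injEq] at hcol
  have hcol' : ((x / p ^ x.factorization p : ℕ) : ZMod p)
      = ((y / p ^ y.factorization p : ℕ) : ZMod p) := by
    rw [← ZMod.natCast_mod _ p, hcol, ZMod.natCast_mod]
  rcases le_total (x.factorization p) (y.factorization p) with h | h
  · exact key a b c p hp h1 h3 x y z hx hy hz h hcol' heq
  · exact key b a c p hp h2 (by rwa [add_comm b a]) y x z hy hx hz h hcol'.symm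
      (by linear_combination heq)
end

section
/- Let a, b, c ∈ ℤ and assume that the equation a x^2 + b y^2 = c z^2 is partition regular with respect to (x, y). Then at least one of the integers ac, bc, (a+b)c, ab(a+b)c is a perfect square. -/
open NumberTheorySymbols


lemma crt_odd (S : Finset ℕ) (hS : ∀ q ∈ S, q.Prime ∧ q ≠ 2) (r : ZMod 8)
    (g : (q : ℕ) → ZMod q) :
    ∃ n : ℕ, 0 < n ∧ (n : ZMod 8) = r ∧ ∀ q ∈ S, (n : ZMod q) = g q := by
  classical
  induction S using Finset.induction with
  | empty =>
    refine ⟨r.val + 8, by positivity, ?_, by simp⟩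
    push_cast
    rw [ZMod.natCast_val, ZMod.cast_id, show (8 : ZMod 8) = 0 by decide, add_zero]
  | @insert q S hq IH =>
    obtain ⟨n, hn0, hn8, hnS⟩ := IH (fun q' hq' => hS q' (Finset.mem_insert_of_mem hq'))
    obtain ⟨hqp, hq2⟩ := hS q (Finset.mem_insert_self q S)
    haveI : Fact q.Prime := ⟨hqp⟩
    set P : ℕ := 8 * S.prod id with hP
    have hqP : ¬ q ∣ P := by
      intro h
      rcases (Nat.Prime.dvd_mul hqp).mp h with h8 | hprod
      · exact hq2 ((Nat.prime_dvd_prime_iff_eq hqp Nat.prime_two).mp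
          (hqp.dvd_of_dvd_pow (show q ∣ 2 ^ 3 by norm_num at h8 ⊢; exact h8)))
      · obtain ⟨q', hq', hdvd⟩ := (Prime.dvd_finset_prod_iff hqp.prime id).mp hprod
        exact hq (((Nat.prime_dvd_prime_iff_eq hqp (hS q' (Finset.mem_insert_of_mem hq')).1).mp
          hdvd) ▸ hq')
    have hPz : (P : ZMod q) ≠ 0 := fun h => hqP ((ZMod.natCast_eq_zero_iff P q).mp h)
    set k : ℕ := ((g q - (n : ZMod q)) * (P : ZMod q)⁻¹).val with hk
    refine ⟨n + P * k, by positivity, ?_, ?_⟩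
    · have h8P : (P : ZMod 8) = 0 := by
        rw [hP]; push_cast; rw [show (8 : ZMod 8) = 0 by decide]; ring
      push_cast
      rw [h8P, hn8]; ring
    · intro q' hq'
      rcases Finset.mem_insert.mp hq' with rfl | hq'S
      · push_cast
        rw [hk, ZMod.natCast_val, ZMod.cast_id]
        field_simp
        ring
      · haveI : Fact q'.Prime := ⟨(hS q' hq').1⟩
        have hq'P : (P : ZMod q') = 0 := (ZMod.natCast_eq_zero_iff P q').mpr
          (Dvd.dvd.mul_left (Finset.dvd_prod_of_mem id hq'S) 8)
        push_cast
        rw [hq'P, hnS q' hq'S]; ring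


lemma jac_prod (x : ℤ) (S : Finset ℕ) (h : ∀ q ∈ S, q ≠ 0) :
    J(x | ∏ q ∈ S, q) = ∏ q ∈ S, J(x | q) := by
  classical
  induction S using Finset.induction with
  | empty => simp
  | @insert q S hq IH =>
    rw [Finset.prod_insert hq, Finset.prod_insert hq,
      jacobiSym.mul_right' x (h q (Finset.mem_insert_self q S))
        (Finset.prod_ne_zero_iff.mpr fun q' hq' => h q' (Finset.mem_insert_of_mem hq')),
      IH (fun q' hq' => h q' (Finset.mem_insert_of_mem hq'))]


lemma exists_jacobi_neg_one {d E : ℤ} (hd : d ≠ 0) (hE : E ≠ 0) (hns : ¬ IsSquare d) :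
    ∃ n : ℕ, Odd n ∧ 0 < n ∧ Nat.Coprime n (d * E).natAbs ∧ J(d | n) = -1 := by
  classical
  set m : ℕ := d.natAbs with hm
  have hm0 : m ≠ 0 := Int.natAbs_ne_zero.mpr hd
  obtain ⟨A, B, hBA, hA⟩ := Nat.sq_mul_squarefree m
  have hA0 : A ≠ 0 := hA.ne_zero
  have hB0 : B ≠ 0 := by rintro rfl; simp at hBA; omega
  have hdm : d = (m : ℤ) ∨ d = -(m : ℤ) := Int.natAbs_eq d
  have hDE0 : (d * E).natAbs ≠ 0 := Int.natAbs_ne_zero.mpr (mul_ne_zero hd hE)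
  set S : Finset ℕ := (d * E).natAbs.primeFactors.erase 2 with hSdef
  have hS : ∀ q ∈ S, q.Prime ∧ q ≠ 2 := fun q hq =>
    ⟨Nat.prime_of_mem_primeFactors (Finset.mem_of_mem_erase hq), (Finset.mem_erase.mp hq).1⟩
  have hmdvd : m ∣ (d * E).natAbs := by
    rw [hm]; exact Int.natAbs_dvd_natAbs.mpr (dvd_mul_right d E)
  have hmem : ∀ q : ℕ, q.Prime → q ≠ 2 → q ∣ m → q ∈ S := fun q hq h2 hdvd =>
    Finset.mem_erase.mpr ⟨h2, Nat.mem_primeFactors.mpr ⟨hq, hdvd.trans hmdvd, hDE0⟩⟩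
  -- coprimality criterion
  have hcop : ∀ n : ℕ, n % 2 = 1 → (∀ q ∈ S, (n : ZMod q) ≠ 0) →
      Nat.Coprime n (d * E).natAbs := by
    intro n hodd hres
    by_contra hncop
    obtain ⟨p, hp, hpn, hpDE⟩ := Nat.Prime.not_coprime_iff_dvd.mp hncop
    by_cases hp2 : p = 2
    · subst hp2; omega
    · have hpS : p ∈ S := Finset.mem_erase.mpr ⟨hp2, Nat.mem_primeFactors.mpr ⟨hp, hpDE, hDE0⟩⟩
      haveI : Fact p.Prime := ⟨hp⟩
      exact hres p hpS ((ZMod.natCast_eq_zero_iff n p).mpr hpn)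
  have hBdvd : B ∣ m := ⟨B * A, by rw [← hBA]; ring⟩
  have hgcdB : ∀ n : ℕ, Nat.Coprime n (d * E).natAbs → ((B : ℤ)).gcd n = 1 := by
    intro n hn
    rw [Int.gcd_natCast_natCast]
    exact (hn.coprime_dvd_right (hBdvd.trans hmdvd)).symm
  by_cases hA1 : A = 1
  · -- d = -B^2
    have hmB : m = B ^ 2 := by rw [← hBA, hA1, mul_one]
    have hdneg : d = -((B : ℤ) ^ 2) := by
      rcases hdm with h | h
      · exact absurd ⟨(B : ℤ), by rw [h, hmB]; push_cast; ring⟩ hns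
      · rw [h, hmB]; push_cast; ring
    obtain ⟨n, hn0, hn8, hnS⟩ := crt_odd S hS 3 (fun _ => 1)
    have hmod8 : n % 8 = 3 := by
      have := ZMod.val_natCast (n := 8) n
      rw [hn8] at this
      rw [← this]; rfl
    have hodd : n % 2 = 1 := by omega
    have hcopn : Nat.Coprime n (d * E).natAbs := by
      refine hcop n hodd fun q hq => ?_
      haveI : Fact q.Prime := ⟨(hS q hq).1⟩
      rw [hnS q hq]
      exact one_ne_zero
    refine ⟨n, Nat.odd_iff.mpr hodd, hn0, hcopn, ?_⟩
    rw [show d = -((B : ℤ) ^ 2) from hdneg, jacobiSym.neg _ (Nat.odd_iff.mpr hodd),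
      jacobiSym.sq_one' (hgcdB n hcopn), mul_one, ZMod.χ₄_nat_three_mod_four (by omega)]
  by_cases hA2 : A = 2
  · -- d = ±(2 B^2)
    obtain ⟨n, hn0, hn8, hnS⟩ := crt_odd S hS 5 (fun _ => 1)
    have hmod8 : n % 8 = 5 := by
      have := ZMod.val_natCast (n := 8) n
      rw [hn8] at this
      rw [← this]; rfl
    have hodd : n % 2 = 1 := by omega
    have hcopn : Nat.Coprime n (d * E).natAbs := by
      refine hcop n hodd fun q hq => ?_
      haveI : Fact q.Prime := ⟨(hS q hq).1⟩
      rw [hnS q hq]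
      exact one_ne_zero
    have hchi8 : ZMod.χ₈ (n : ZMod 8) = -1 := by
      rw [ZMod.χ₈_nat_mod_eight, hmod8]
      decide
    have hJm : J((m : ℤ) | n) = -1 := by
      rw [show ((m : ℤ)) = (B : ℤ) ^ 2 * 2 by rw [← hBA, hA2]; push_cast; ring,
        jacobiSym.mul_left, jacobiSym.sq_one' (hgcdB n hcopn), one_mul,
        jacobiSym.at_two (Nat.odd_iff.mpr hodd), hchi8]
    refine ⟨n, Nat.odd_iff.mpr hodd, hn0, hcopn, ?_⟩
    rcases hdm with h | h
    · rw [h, hJm]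
    · rw [h, jacobiSym.neg _ (Nat.odd_iff.mpr hodd), hJm,
        ZMod.χ₄_nat_one_mod_four (by omega), one_mul]
  · -- A has an odd prime factor q
    set A₀ : ℕ := A / 2 ^ A.factorization 2 with hA₀def
    have hA₀dvd : A₀ ∣ A := Nat.ordCompl_dvd A 2
    have hA₀odd : ¬ 2 ∣ A₀ := Nat.not_dvd_ordCompl Nat.prime_two hA0
    have hA₀0 : A₀ ≠ 0 := (Nat.ordCompl_pos 2 hA0).ne'
    have hA₀1 : A₀ ≠ 1 := by
      intro h1
      have hself := Nat.ordProj_mul_ordCompl_eq_self A 2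
      rw [← hA₀def] at hself
      have hle : A.factorization 2 ≤ 1 := hA.natFactorization_le_one 2
      interval_cases h : A.factorization 2 <;> simp [h1, h] at hself <;> omega
    set q : ℕ := A₀.minFac with hqdef
    have hqp : q.Prime := Nat.minFac_prime hA₀1
    haveI : Fact q.Prime := ⟨hqp⟩
    have hqA₀ : q ∣ A₀ := Nat.minFac_dvd A₀
    have hq2 : q ≠ 2 := fun h => hA₀odd (h ▸ hqA₀)
    have hAdvdm : A ∣ m := ⟨B ^ 2, by rw [← hBA]; ring⟩
    have hqS : q ∈ S := hmem q hqp hq2 ((hqA₀.trans hA₀dvd).trans hAdvdm)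
    have hchar : ringChar (ZMod q) ≠ 2 := by rw [ZMod.ringChar_zmod_n]; exact hq2
    obtain ⟨u, hu⟩ := FiniteField.exists_nonsquare hchar
    have hu0 : u ≠ 0 := fun h0 => hu (h0 ▸ ⟨0, (zero_mul 0).symm⟩)
    have huval : ((u.val : ℕ) : ZMod q) = u := ZMod.natCast_rightInverse u
    set g : (q' : ℕ) → ZMod q' := fun q' => if q' = q then ((u.val : ℕ) : ZMod q') else 1
      with hgdef
    obtain ⟨n, hn0, hn8, hnS⟩ := crt_odd S hS 1 g
    have hmod8 : n % 8 = 1 := by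
      have := ZMod.val_natCast (n := 8) n
      rw [hn8] at this
      rw [← this]; rfl
    have hodd : n % 2 = 1 := by omega
    have hoddn : Odd n := Nat.odd_iff.mpr hodd
    have hnq : (n : ZMod q) = u := by
      have h1 := hnS q hqS
      simp only [hgdef, if_pos rfl] at h1
      rw [h1, huval]
    have hcopn : Nat.Coprime n (d * E).natAbs := by
      refine hcop n hodd fun q' hq' => ?_
      haveI : Fact q'.Prime := ⟨(hS q' hq').1⟩
      rw [hnS q' hq']
      simp only [hgdef]
      by_cases h : q' = q
      · subst h
        rw [if_pos rfl, huval]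
        exact hu0
      · rw [if_neg h]
        exact one_ne_zero
    have hA₀sq : Squarefree A₀ := hA.squarefree_of_dvd hA₀dvd
    have hA₀oddnat : Odd A₀ := Nat.odd_iff.mpr (by omega)
    have hchi8 : ZMod.χ₈ (n : ZMod 8) = 1 := by
      rw [ZMod.χ₈_nat_mod_eight, hmod8]
      decide
    -- compute J(n | A₀) = -1
    have hprodA₀ : ∏ p ∈ A₀.primeFactors, p = A₀ := Nat.prod_primeFactors_of_squarefree hA₀sq
    have hJnA₀ : J((n : ℤ) | A₀) = -1 := by
      rw [← hprodA₀, jac_prod _ _ (fun p hp => (Nat.prime_of_mem_primeFactors hp).ne_zero)]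
      have hqmem : q ∈ A₀.primeFactors := Nat.mem_primeFactors.mpr ⟨hqp, hqA₀, hA₀0⟩
      rw [Finset.prod_eq_single_of_mem q hqmem ?side]
      · rw [← jacobiSym.legendreSym.to_jacobiSym]
        rw [legendreSym.eq_neg_one_iff]
        rwa [Int.cast_natCast, hnq]
      case side =>
        intro q' hq' hne
        have hq'p : q'.Prime := Nat.prime_of_mem_primeFactors hq'
        haveI : Fact q'.Prime := ⟨hq'p⟩
        have hq'2 : q' ≠ 2 := by
          rintro rfl
          exact hA₀odd (Nat.mem_primeFactors.mp hq').2.1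
        have hq'S : q' ∈ S := hmem q' hq'p hq'2
          (((Nat.mem_primeFactors.mp hq').2.1.trans hA₀dvd).trans hAdvdm)
        have hres : (n : ZMod q') = 1 := by
          rw [hnS q' hq'S]
          simp only [hgdef]
          rw [if_neg hne]
        rw [← jacobiSym.legendreSym.to_jacobiSym]
        rw [legendreSym.eq_one_iff' q' (by rw [hres]; exact one_ne_zero)]
        rw [hres]
        exact IsSquare.one
    have hJA₀ : J((A₀ : ℤ) | n) = -1 := by
      rw [jacobiSym.quadratic_reciprocity_one_mod_four' hA₀oddnat (by omega)]
      exact hJnA₀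
    have hJm : J((m : ℤ) | n) = -1 := by
      have hmdecomp : (m : ℤ) = (B : ℤ) ^ 2 * (2 : ℤ) ^ A.factorization 2 * (A₀ : ℤ) := by
        have : B ^ 2 * (2 ^ A.factorization 2 * A₀) = m := by
          rw [← hBA]
          congr 1
          exact Nat.ordProj_mul_ordCompl_eq_self A 2
        push_cast [← this]
        ring
      rw [hmdecomp, jacobiSym.mul_left, jacobiSym.mul_left,
        jacobiSym.sq_one' (hgcdB n hcopn), one_mul,
        jacobiSym.pow_left, jacobiSym.at_two hoddn, hchi8, one_pow, one_mul, hJA₀]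
    refine ⟨n, hoddn, hn0, hcopn, ?_⟩
    rcases hdm with h | h
    · rw [h, hJm]
    · rw [h, jacobiSym.neg _ hoddn, hJm, ZMod.χ₄_nat_one_mod_four (by omega), one_mul]


lemma combo : ∀ w₀ w₁ w₂ w₃ : Fin 3 → Bool, w₁ 0 = true → w₂ 1 = true → w₃ 2 = true →
    (w₀ 0).xor ((w₀ 1).xor (w₀ 2)) = true →
    ∃ c₀ c₁ c₂ c₃ : Bool, ∀ i,
      ((c₀ && w₀ i)).xor (((c₁ && w₁ i)).xor (((c₂ && w₂ i)).xor ((c₃ && w₃ i)))) = true := by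
  decide

lemma ifmul (x y : Bool) :
    (if x then (-1:ℤ) else 1) * (if y then (-1:ℤ) else 1) = if x.xor y then -1 else 1 := by
  cases x <;> cases y <;> norm_num


lemma exists_prime_legendre {d₁ d₂ d₃ : ℤ} (h1 : d₁ ≠ 0) (h2 : d₂ ≠ 0) (h3 : d₃ ≠ 0)
    (hs1 : ¬IsSquare d₁) (hs2 : ¬IsSquare d₂) (hs3 : ¬IsSquare d₃)
    (hs123 : ¬IsSquare (d₁ * d₂ * d₃)) :
    ∃ p : ℕ, p.Prime ∧ 2 < p ∧ J(d₁ | p) = -1 ∧ J(d₂ | p) = -1 ∧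
      J(d₃ | p) = -1 := by
  classical
  set E : ℤ := d₁ * d₂ * d₃ with hEdef
  have hE : E ≠ 0 := mul_ne_zero (mul_ne_zero h1 h2) h3
  obtain ⟨n0, hodd0, hpos0, hcop0, hJ0⟩ := exists_jacobi_neg_one hE hE hs123
  obtain ⟨n1, hodd1, hpos1, hcop1, hJ1⟩ := exists_jacobi_neg_one h1 hE hs1
  obtain ⟨n2, hodd2, hpos2, hcop2, hJ2⟩ := exists_jacobi_neg_one h2 hE hs2
  obtain ⟨n3, hodd3, hpos3, hcop3, hJ3⟩ := exists_jacobi_neg_one h3 hE hs3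
  set dv : Fin 3 → ℤ := ![d₁, d₂, d₃] with hdv
  set nv : Fin 4 → ℕ := ![n0, n1, n2, n3] with hnv
  have hdvE : ∀ i, (dv i).natAbs ∣ E.natAbs := by
    intro i
    apply Int.natAbs_dvd_natAbs.mpr
    fin_cases i
    · show d₁ ∣ E
      exact ⟨d₂ * d₃, by rw [hEdef]; ring⟩
    · show d₂ ∣ E
      exact ⟨d₁ * d₃, by rw [hEdef]; ring⟩
    · show d₃ ∣ E
      exact ⟨d₁ * d₂, by rw [hEdef]; ring⟩
  have hcopE : ∀ j, Nat.Coprime (nv j) E.natAbs := by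
    intro j
    have key : ∀ (x : ℤ) (n : ℕ), Nat.Coprime n (x * E).natAbs → Nat.Coprime n E.natAbs :=
      fun x n h => h.coprime_dvd_right (Int.natAbs_dvd_natAbs.mpr (dvd_mul_left E x))
    fin_cases j
    · exact key E n0 hcop0
    · exact key d₁ n1 hcop1
    · exact key d₂ n2 hcop2
    · exact key d₃ n3 hcop3
  have hgcd : ∀ i j, (dv i).gcd (nv j) = 1 := by
    intro i j
    have : Nat.Coprime (nv j) (dv i).natAbs := (hcopE j).coprime_dvd_right (hdvE i)
    rw [Int.gcd]
    simpa [Int.natAbs_natCast] using this.symm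
  have hpm : ∀ j i, J(dv i | nv j) = 1 ∨ J(dv i | nv j) = -1 := fun j i =>
    jacobiSym.eq_one_or_neg_one (hgcd i j)
  set w : Fin 4 → Fin 3 → Bool := fun j i => decide (J(dv i | nv j) = -1) with hwdef
  have hw : ∀ j i, J(dv i | nv j) = if w j i then -1 else 1 := by
    intro j i
    rcases hpm j i with h | h
    · have hf : w j i = false := by
        show decide (J(dv i | nv j) = -1) = false
        rw [decide_eq_false_iff_not, h]
        norm_num
      rw [h, hf]
      norm_num
    · have ht : w j i = true := by
        show decide (J(dv i | nv j) = -1) = true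
        rw [decide_eq_true_eq]
        exact h
      rw [h, ht]
      norm_num
  have hw1 : w 1 0 = true := by
    show decide (J(dv 0 | nv 1) = -1) = true
    rw [decide_eq_true_eq]
    show J(dv 0 | nv 1) = -1
    simpa [hdv, hnv] using hJ1
  have hw2 : w 2 1 = true := by
    show decide (J(dv 1 | nv 2) = -1) = true
    rw [decide_eq_true_eq]
    simpa [hdv, hnv] using hJ2
  have hw3 : w 3 2 = true := by
    show decide (J(dv 2 | nv 3) = -1) = true
    rw [decide_eq_true_eq]
    simpa [hdv, hnv] using hJ3
  have hprod0 : (if w 0 0 then (-1:ℤ) else 1) * ((if w 0 1 then (-1:ℤ) else 1) *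
      (if w 0 2 then (-1:ℤ) else 1)) = -1 := by
    rw [← hw 0 0, ← hw 0 1, ← hw 0 2, ← jacobiSym.mul_left, ← jacobiSym.mul_left]
    show J(dv 0 * (dv 1 * dv 2) | nv 0) = -1
    have : dv 0 * (dv 1 * dv 2) = E := by
      show d₁ * (d₂ * d₃) = E
      rw [hEdef]; ring
    rw [this]
    simpa [hnv] using hJ0
  have hxor0 : (w 0 0).xor ((w 0 1).xor (w 0 2)) = true := by
    cases h00 : w 0 0 <;> cases h01 : w 0 1 <;> cases h02 : w 0 2 <;>
      rw [h00, h01, h02] at hprod0 <;> first | rfl | (exfalso; norm_num at hprod0)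
  obtain ⟨c₀, c₁, c₂, c₃, hc⟩ := combo (w 0) (w 1) (w 2) (w 3) hw1 hw2 hw3 hxor0
  set N : ℕ := (cond c₀ n0 1) * ((cond c₁ n1 1) * ((cond c₂ n2 1) * (cond c₃ n3 1))) with hNdef
  have hfacpos : ∀ (c : Bool) (n : ℕ), 0 < n → 0 < cond c n 1 := by
    intro c n h; cases c <;> simp [h]
  have hNpos : 0 < N := by
    apply Nat.mul_pos (hfacpos _ _ hpos0)
    exact Nat.mul_pos (hfacpos _ _ hpos1) (Nat.mul_pos (hfacpos _ _ hpos2) (hfacpos _ _ hpos3))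
  have hfacodd : ∀ (c : Bool) (n : ℕ), Odd n → Odd (cond c n 1) := by
    intro c n h; cases c <;> simp [h]
  have hNodd : Odd N := by
    refine Odd.mul (hfacodd _ _ hodd0) ?_
    exact Odd.mul (hfacodd _ _ hodd1) (Odd.mul (hfacodd _ _ hodd2) (hfacodd _ _ hodd3))
  have hfaccop : ∀ (c : Bool) (j : Fin 4), Nat.Coprime (cond c (nv j) 1) E.natAbs := by
    intro c j; cases c
    · simp [Nat.coprime_one_left]
    · simpa using hcopE j
  have hNcopE : Nat.Coprime N E.natAbs := by
    have e0 := hfaccop c₀ 0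
    have e1 := hfaccop c₁ 1
    have e2 := hfaccop c₂ 2
    have e3 := hfaccop c₃ 3
    simp only [hnv, Matrix.cons_val_zero, Matrix.cons_val_one, Matrix.head_cons] at e0 e1 e2 e3
    exact Nat.Coprime.mul e0 (Nat.Coprime.mul e1 (Nat.Coprime.mul e2 e3))
  have hne : ∀ (c : Bool) (j : Fin 4), cond c (nv j) 1 ≠ 0 := by
    intro c j; cases c
    · simp
    · simp only [cond]
      fin_cases j <;> simp [hnv] <;> omega
  set N : ℕ := (cond c₀ (nv 0) 1) * ((cond c₁ (nv 1) 1) * ((cond c₂ (nv 2) 1) *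
    (cond c₃ (nv 3) 1))) with hNdef2
  have hNeq : N = (cond c₀ n0 1) * ((cond c₁ n1 1) * ((cond c₂ n2 1) * (cond c₃ n3 1))) := by
    rw [hNdef2]; simp [hnv]
  have hJN : ∀ i, J(dv i | N) = -1 := by
    intro i
    have hfac : ∀ (c : Bool) (j : Fin 4),
        J(dv i | cond c (nv j) 1) = if (c && w j i) then (-1:ℤ) else 1 := by
      intro c j; cases c
      · simp
      · simpa using hw j i
    rw [hNdef2,
      jacobiSym.mul_right' _ (hne c₀ 0)
        (Nat.mul_ne_zero (hne c₁ 1) (Nat.mul_ne_zero (hne c₂ 2) (hne c₃ 3))),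
      jacobiSym.mul_right' _ (hne c₁ 1) (Nat.mul_ne_zero (hne c₂ 2) (hne c₃ 3)),
      jacobiSym.mul_right' _ (hne c₂ 2) (hne c₃ 3),
      hfac c₀ 0, hfac c₁ 1, hfac c₂ 2, hfac c₃ 3, ifmul, ifmul, ifmul, hc i]
    rfl
  have hNpos : 0 < N := by
    rw [hNeq]
    have hfacpos : ∀ (c : Bool) (n : ℕ), 0 < n → 0 < cond c n 1 := by
      intro c n h; cases c <;> simp [h]
    exact Nat.mul_pos (hfacpos _ _ hpos0)
      (Nat.mul_pos (hfacpos _ _ hpos1) (Nat.mul_pos (hfacpos _ _ hpos2) (hfacpos _ _ hpos3)))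
  have hNodd : Odd N := by
    rw [hNeq]
    have hfacodd : ∀ (c : Bool) (n : ℕ), Odd n → Odd (cond c n 1) := by
      intro c n h; cases c <;> simp [h, odd_one]
    exact Odd.mul (hfacodd _ _ hodd0)
      (Odd.mul (hfacodd _ _ hodd1) (Odd.mul (hfacodd _ _ hodd2) (hfacodd _ _ hodd3)))
  have hNcopE : Nat.Coprime N E.natAbs := by
    have hfaccop : ∀ (c : Bool) (j : Fin 4), Nat.Coprime (cond c (nv j) 1) E.natAbs := by
      intro c j; cases c
      · simp [Nat.coprime_one_left]
      · simpa using hcopE j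
    rw [hNdef2]
    exact Nat.Coprime.mul (hfaccop c₀ 0)
      (Nat.Coprime.mul (hfaccop c₁ 1) (Nat.Coprime.mul (hfaccop c₂ 2) (hfaccop c₃ 3)))
  -- Dirichlet
  set M : ℕ := 4 * E.natAbs with hMdef
  have hM0 : M ≠ 0 := by
    have : E.natAbs ≠ 0 := Int.natAbs_ne_zero.mpr hE
    positivity
  haveI : NeZero M := ⟨hM0⟩
  have hNM : Nat.Coprime N M := by
    rw [hMdef]
    refine Nat.Coprime.mul_right ?_ hNcopE
    have h2 : Nat.Coprime N 2 := Nat.coprime_two_right.mpr hNodd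
    simpa using h2.pow_right 2
  have hunit : IsUnit ((N : ZMod M)) := (ZMod.isUnit_iff_coprime N M).mpr hNM
  obtain ⟨p, hpgt, hpp, hpcast⟩ := Nat.forall_exists_prime_gt_and_eq_mod hunit 2
  haveI : Fact p.Prime := ⟨hpp⟩
  have hpodd : Odd p := hpp.odd_of_ne_two (by omega)
  have hpmod : p ≡ N [MOD M] := (ZMod.natCast_eq_natCast_iff p N M).mp (by rw [hpcast])
  have hleg : ∀ i, J(dv i | p) = -1 := by
    intro i
    have hdvd : 4 * (dv i).natAbs ∣ M := by
      rw [hMdef]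
      exact Nat.mul_dvd_mul_left 4 (hdvE i)
    have hmodi : p % (4 * (dv i).natAbs) = N % (4 * (dv i).natAbs) := hpmod.of_dvd hdvd
    rw [jacobiSym.mod_right _ hpodd, hmodi, ← jacobiSym.mod_right _ hNodd]
    exact hJN i
  refine ⟨p, hpp, hpgt, ?_, ?_, ?_⟩
  · simpa [hdv] using hleg 0
  · simpa [hdv] using hleg 1
  · simpa [hdv] using hleg 2



lemma keyLt {p : ℕ} (hp : p.Prime) (a b c u w t : ℤ) (α β γ : ℕ)
    (hpa : ¬(p:ℤ) ∣ a) (hpc : ¬(p:ℤ) ∣ c) (hpu : ¬(p:ℤ) ∣ u) (hpt : ¬(p:ℤ) ∣ t)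
    (hab : α < β)
    (heq : a * ((p:ℤ)^α * u)^2 + b * ((p:ℤ)^β * w)^2 = c * ((p:ℤ)^γ * t)^2) :
    IsSquare ((a * c : ℤ) : ZMod p) := by
  haveI : Fact p.Prime := ⟨hp⟩
  have hpz : Prime (p:ℤ) := Nat.prime_iff_prime_int.mp hp
  have hp0 : (p:ℤ) ≠ 0 := by exact_mod_cast hp.ne_zero
  have hct : ¬ (p:ℤ) ∣ c * t^2 := by
    intro h
    rcases hpz.dvd_mul.mp h with h' | h'
    · exact hpc h'
    · exact hpt (hpz.dvd_of_dvd_pow h')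
  have hau : ¬ (p:ℤ) ∣ a * u^2 := by
    intro h
    rcases hpz.dvd_mul.mp h with h' | h'
    · exact hpa h'
    · exact hpu (hpz.dvd_of_dvd_pow h')
  have hγα : γ = α := by
    rcases lt_trichotomy γ α with h | h | h
    · exfalso
      have h1 : (p:ℤ)^(2*γ+1) ∣ a * ((p:ℤ)^α * u)^2 :=
        dvd_trans (pow_dvd_pow _ (by omega : 2*γ+1 ≤ 2*α)) ⟨a * u^2, by ring⟩
      have h2 : (p:ℤ)^(2*γ+1) ∣ b * ((p:ℤ)^β * w)^2 :=
        dvd_trans (pow_dvd_pow _ (by omega : 2*γ+1 ≤ 2*β)) ⟨b * w^2, by ring⟩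
      have h3 : (p:ℤ)^(2*γ+1) ∣ c * ((p:ℤ)^γ * t)^2 := by
        rw [← heq]; exact dvd_add h1 h2
      have e : c * ((p:ℤ)^γ * t)^2 = (p:ℤ)^(2*γ) * (c * t^2) := by ring
      rw [e, pow_succ] at h3
      exact hct ((mul_dvd_mul_iff_left (pow_ne_zero _ hp0)).mp h3)
    · exact h
    · exfalso
      have h1 : (p:ℤ)^(2*α+1) ∣ b * ((p:ℤ)^β * w)^2 :=
        dvd_trans (pow_dvd_pow _ (by omega : 2*α+1 ≤ 2*β)) ⟨b * w^2, by ring⟩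
      have h2 : (p:ℤ)^(2*α+1) ∣ c * ((p:ℤ)^γ * t)^2 :=
        dvd_trans (pow_dvd_pow _ (by omega : 2*α+1 ≤ 2*γ)) ⟨c * t^2, by ring⟩
      have h3 : (p:ℤ)^(2*α+1) ∣ a * ((p:ℤ)^α * u)^2 := by
        have e : a * ((p:ℤ)^α * u)^2 = c * ((p:ℤ)^γ * t)^2 - b * ((p:ℤ)^β * w)^2 := by
          linear_combination heq
        rw [e]; exact dvd_sub h2 h1
      have e : a * ((p:ℤ)^α * u)^2 = (p:ℤ)^(2*α) * (a * u^2) := by ring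
      rw [e, pow_succ] at h3
      exact hau ((mul_dvd_mul_iff_left (pow_ne_zero _ hp0)).mp h3)
  subst hγα
  obtain ⟨δ, rfl⟩ : ∃ δ, β = γ + δ := ⟨β - γ, by omega⟩
  have hδ : 1 ≤ δ := by omega
  have hkey : (p:ℤ)^(2*γ) * (a*u^2 + (p:ℤ)^(2*δ) * (b*w^2)) = (p:ℤ)^(2*γ) * (c*t^2) := by
    linear_combination heq
  have hcanc : a*u^2 + (p:ℤ)^(2*δ) * (b*w^2) = c*t^2 :=
    mul_left_cancel₀ (pow_ne_zero _ hp0) hkey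
  have hz : ((a : ZMod p)) * ((u:ℤ) : ZMod p)^2 = ((c:ℤ) : ZMod p) * ((t:ℤ) : ZMod p)^2 := by
    have h0 := congrArg (fun x : ℤ => (x : ZMod p)) hcanc
    push_cast at h0
    rwa [ZMod.natCast_self, zero_pow (by omega : 2*δ ≠ 0), zero_mul, add_zero] at h0
  have hu0 : ((u:ℤ) : ZMod p) ≠ 0 := fun h => hpu ((ZMod.intCast_zmod_eq_zero_iff_dvd u p).mp h)
  have ht0 : ((t:ℤ) : ZMod p) ≠ 0 := fun h => hpt ((ZMod.intCast_zmod_eq_zero_iff_dvd t p).mp h)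
  refine ⟨((c:ℤ) : ZMod p) * ((t:ℤ) : ZMod p) * ((u:ℤ) : ZMod p)⁻¹, ?_⟩
  push_cast
  field_simp
  linear_combination ((c:ℤ) : ZMod p) * hz

lemma keyEq {p : ℕ} (hp : p.Prime) (a b c u w t : ℤ) (α γ : ℕ)
    (hpab : ¬(p:ℤ) ∣ (a+b)) (hpc : ¬(p:ℤ) ∣ c) (hpu : ¬(p:ℤ) ∣ u) (hpt : ¬(p:ℤ) ∣ t)
    (huw : ((u:ℤ) : ZMod p) = ((w:ℤ) : ZMod p))
    (heq : a * ((p:ℤ)^α * u)^2 + b * ((p:ℤ)^α * w)^2 = c * ((p:ℤ)^γ * t)^2) :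
    IsSquare (((a+b) * c : ℤ) : ZMod p) := by
  haveI : Fact p.Prime := ⟨hp⟩
  have hpz : Prime (p:ℤ) := Nat.prime_iff_prime_int.mp hp
  have hp0 : (p:ℤ) ≠ 0 := by exact_mod_cast hp.ne_zero
  have hct : ¬ (p:ℤ) ∣ c * t^2 := by
    intro h
    rcases hpz.dvd_mul.mp h with h' | h'
    · exact hpc h'
    · exact hpt (hpz.dvd_of_dvd_pow h')
  have hu0 : ((u:ℤ) : ZMod p) ≠ 0 := fun h => hpu ((ZMod.intCast_zmod_eq_zero_iff_dvd u p).mp h)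
  have ht0 : ((t:ℤ) : ZMod p) ≠ 0 := fun h => hpt ((ZMod.intCast_zmod_eq_zero_iff_dvd t p).mp h)
  have hab0 : ((a + b : ℤ) : ZMod p) ≠ 0 :=
    fun h => hpab ((ZMod.intCast_zmod_eq_zero_iff_dvd (a+b) p).mp h)
  have hsum : ¬ (p:ℤ) ∣ (a*u^2 + b*w^2) := by
    intro h
    have h0 : ((a*u^2 + b*w^2 : ℤ) : ZMod p) = 0 := (ZMod.intCast_zmod_eq_zero_iff_dvd _ p).mpr h
    push_cast at h0
    rw [← huw] at h0
    have h1 : ((a + b : ℤ) : ZMod p) * ((u:ℤ) : ZMod p)^2 = 0 := by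
      push_cast
      linear_combination h0
    rcases mul_eq_zero.mp h1 with h' | h'
    · exact hab0 h'
    · exact hu0 (pow_eq_zero_iff two_ne_zero |>.mp h')
  have hγα : γ = α := by
    rcases lt_trichotomy γ α with h | h | h
    · exfalso
      have h1 : (p:ℤ)^(2*γ+1) ∣ a * ((p:ℤ)^α * u)^2 :=
        dvd_trans (pow_dvd_pow _ (by omega : 2*γ+1 ≤ 2*α)) ⟨a * u^2, by ring⟩
      have h2 : (p:ℤ)^(2*γ+1) ∣ b * ((p:ℤ)^α * w)^2 :=
        dvd_trans (pow_dvd_pow _ (by omega : 2*γ+1 ≤ 2*α)) ⟨b * w^2, by ring⟩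
      have h3 : (p:ℤ)^(2*γ+1) ∣ c * ((p:ℤ)^γ * t)^2 := by
        rw [← heq]; exact dvd_add h1 h2
      have e : c * ((p:ℤ)^γ * t)^2 = (p:ℤ)^(2*γ) * (c * t^2) := by ring
      rw [e, pow_succ] at h3
      exact hct ((mul_dvd_mul_iff_left (pow_ne_zero _ hp0)).mp h3)
    · exact h
    · exfalso
      have h2 : (p:ℤ)^(2*α+1) ∣ c * ((p:ℤ)^γ * t)^2 :=
        dvd_trans (pow_dvd_pow _ (by omega : 2*α+1 ≤ 2*γ)) ⟨c * t^2, by ring⟩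
      rw [← heq] at h2
      have e : a * ((p:ℤ)^α * u)^2 + b * ((p:ℤ)^α * w)^2
          = (p:ℤ)^(2*α) * (a*u^2 + b*w^2) := by ring
      rw [e, pow_succ] at h2
      exact hsum ((mul_dvd_mul_iff_left (pow_ne_zero _ hp0)).mp h2)
  subst hγα
  have hkey : (p:ℤ)^(2*γ) * (a*u^2 + b*w^2) = (p:ℤ)^(2*γ) * (c*t^2) := by
    linear_combination heq
  have hcanc : a*u^2 + b*w^2 = c*t^2 := mul_left_cancel₀ (pow_ne_zero _ hp0) hkey
  have hz : ((a+b : ℤ) : ZMod p) * ((u:ℤ) : ZMod p)^2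
      = ((c:ℤ) : ZMod p) * ((t:ℤ) : ZMod p)^2 := by
    have h0 := congrArg (fun x : ℤ => (x : ZMod p)) hcanc
    push_cast at h0 ⊢
    rw [← huw] at h0
    linear_combination h0
  refine ⟨((c:ℤ) : ZMod p) * ((t:ℤ) : ZMod p) * ((u:ℤ) : ZMod p)⁻¹, ?_⟩
  push_cast at hz ⊢
  field_simp
  linear_combination ((c:ℤ) : ZMod p) * hz

theorem stmt16 (a b c : ℤ)
    (hPR : ∀ (r : ℕ) (col : ℕ → Fin r),
      ∃ x y z : ℕ, 0 < x ∧ 0 < y ∧ 0 < z ∧ x ≠ y ∧ col x = col y ∧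
        a * (x : ℤ) ^ 2 + b * (y : ℤ) ^ 2 = c * (z : ℤ) ^ 2) :
    (∃ k : ℤ, a * c = k ^ 2) ∨ (∃ k : ℤ, b * c = k ^ 2) ∨
      (∃ k : ℤ, (a + b) * c = k ^ 2) ∨ (∃ k : ℤ, a * b * (a + b) * c = k ^ 2) := by
  by_contra hcon
  push_neg at hcon
  obtain ⟨hc1, hc2, hc3, hc4⟩ := hcon
  have ha : a ≠ 0 := by rintro rfl; exact hc1 0 (by ring)
  have hcz : c ≠ 0 := by rintro rfl; exact hc1 0 (by ring)
  have hb : b ≠ 0 := by rintro rfl; exact hc2 0 (by ring)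
  have habz : a + b ≠ 0 := fun h => hc3 0 (by rw [h]; ring)
  have hns1 : ¬ IsSquare (a*c) := fun ⟨k, hk⟩ => hc1 k (by rw [hk]; ring)
  have hns2 : ¬ IsSquare (b*c) := fun ⟨k, hk⟩ => hc2 k (by rw [hk]; ring)
  have hns3 : ¬ IsSquare ((a+b)*c) := fun ⟨k, hk⟩ => hc3 k (by rw [hk]; ring)
  have hns123 : ¬ IsSquare ((a*c) * (b*c) * ((a+b)*c)) := by
    rintro ⟨k, hk⟩
    have h1 : c^2 ∣ k^2 := ⟨a*b*(a+b)*c, by linear_combination -hk⟩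
    have h2 : c ∣ k := (Int.pow_dvd_pow_iff two_ne_zero).mp h1
    obtain ⟨k', rfl⟩ := h2
    apply hc4 k'
    have h3 : c^2 * (a*b*(a+b)*c) = c^2 * k'^2 := by linear_combination hk
    exact mul_left_cancel₀ (pow_ne_zero 2 hcz) h3
  obtain ⟨p, hpp, hp2, hL1, hL2, hL3⟩ := exists_prime_legendre (mul_ne_zero ha hcz)
    (mul_ne_zero hb hcz) (mul_ne_zero habz hcz) hns1 hns2 hns3 hns123
  haveI : Fact p.Prime := ⟨hpp⟩
  have hq1 : ¬ IsSquare ((a*c : ℤ) : ZMod p) := ZMod.nonsquare_of_jacobiSym_eq_neg_one hL1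
  have hq2 : ¬ IsSquare ((b*c : ℤ) : ZMod p) := ZMod.nonsquare_of_jacobiSym_eq_neg_one hL2
  have hq3 : ¬ IsSquare (((a+b)*c : ℤ) : ZMod p) := ZMod.nonsquare_of_jacobiSym_eq_neg_one hL3
  have hdvd1 : ¬ (p:ℤ) ∣ a*c := fun h => hq1 (by
    rw [(ZMod.intCast_zmod_eq_zero_iff_dvd _ p).mpr h]; exact ⟨0, by ring⟩)
  have hdvd2 : ¬ (p:ℤ) ∣ b*c := fun h => hq2 (by
    rw [(ZMod.intCast_zmod_eq_zero_iff_dvd _ p).mpr h]; exact ⟨0, by ring⟩)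
  have hdvd3 : ¬ (p:ℤ) ∣ (a+b)*c := fun h => hq3 (by
    rw [(ZMod.intCast_zmod_eq_zero_iff_dvd _ p).mpr h]; exact ⟨0, by ring⟩)
  have hpa : ¬ (p:ℤ) ∣ a := fun h => hdvd1 (h.mul_right c)
  have hpb : ¬ (p:ℤ) ∣ b := fun h => hdvd2 (h.mul_right c)
  have hpc : ¬ (p:ℤ) ∣ c := fun h => hdvd1 (h.mul_left a)
  have hpab : ¬ (p:ℤ) ∣ (a+b) := fun h => hdvd3 (h.mul_right c)
  set col : ℕ → Fin p := fun n => ⟨(n / p ^ (n.factorization p)) % p, Nat.mod_lt _ hpp.pos⟩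
    with hcol
  obtain ⟨x, y, z, hx, hy, hz, hxy, hcxy, heq⟩ := hPR p col
  set A := x.factorization p with hA
  set B := y.factorization p with hB
  set G := z.factorization p with hG
  set U := x / p ^ A with hU
  set W := y / p ^ B with hW
  set T := z / p ^ G with hT
  have hxdec : (p:ℕ)^A * U = x := Nat.ordProj_mul_ordCompl_eq_self x p
  have hydec : (p:ℕ)^B * W = y := Nat.ordProj_mul_ordCompl_eq_self y p
  have hzdec : (p:ℕ)^G * T = z := Nat.ordProj_mul_ordCompl_eq_self z p
  have hpU : ¬ p ∣ U := Nat.not_dvd_ordCompl hpp hx.ne'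
  have hpW : ¬ p ∣ W := Nat.not_dvd_ordCompl hpp hy.ne'
  have hpT : ¬ p ∣ T := Nat.not_dvd_ordCompl hpp hz.ne'
  have hpUZ : ¬ (p:ℤ) ∣ (U:ℤ) := fun h => hpU (Int.natCast_dvd_natCast.mp h)
  have hpWZ : ¬ (p:ℤ) ∣ (W:ℤ) := fun h => hpW (Int.natCast_dvd_natCast.mp h)
  have hpTZ : ¬ (p:ℤ) ∣ (T:ℤ) := fun h => hpT (Int.natCast_dvd_natCast.mp h)
  have hxz : (x:ℤ) = (p:ℤ)^A * (U:ℤ) := by exact_mod_cast (congrArg (Nat.cast (R := ℤ)) hxdec).symm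
  have hyz : (y:ℤ) = (p:ℤ)^B * (W:ℤ) := by exact_mod_cast (congrArg (Nat.cast (R := ℤ)) hydec).symm
  have hzz : (z:ℤ) = (p:ℤ)^G * (T:ℤ) := by exact_mod_cast (congrArg (Nat.cast (R := ℤ)) hzdec).symm
  have heqZ : a * ((p:ℤ)^A * (U:ℤ))^2 + b * ((p:ℤ)^B * (W:ℤ))^2 = c * ((p:ℤ)^G * (T:ℤ))^2 := by
    rw [← hxz, ← hyz, ← hzz]; exact heq
  have hUW : U % p = W % p := congrArg Fin.val hcxy
  rcases lt_trichotomy A B with h | h | h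
  · exact hq1 (keyLt hpp a b c U W T A B G hpa hpc hpUZ hpTZ h heqZ)
  · rw [← h] at heqZ
    have huwZ : ((U:ℤ) : ZMod p) = ((W:ℤ) : ZMod p) := by
      have : ((U:ℕ) : ZMod p) = ((W:ℕ) : ZMod p) := (ZMod.natCast_eq_natCast_iff U W p).mpr hUW
      exact_mod_cast this
    exact hq3 (keyEq hpp a b c U W T A G hpab hpc hpUZ hpTZ huwZ heqZ)
  · have heqZ' : b * ((p:ℤ)^B * (W:ℤ))^2 + a * ((p:ℤ)^A * (U:ℤ))^2
        = c * ((p:ℤ)^G * (T:ℤ))^2 := by linear_combination heqZ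
    exact hq2 (keyLt hpp b a c W U T B A G hpb hpc hpWZ hpTZ h heqZ')
end

section
/- Let a, b, c ∈ ℤ with a ≡ 2 (mod 4), b odd, and ab(a+b)c a perfect square. Then the equation a x^2 + b y^2 = c z^2 is not partition regular with respect to (x, y). -/
/-- Every nonzero natural splits as a power of two times an odd part. -/
lemma nat_two_decomp {n : ℕ} (hn : n ≠ 0) :
    ∃ m : ℕ, Odd m ∧ n = 2 ^ (n.factorization 2) * m := by
  refine ⟨n / 2 ^ (n.factorization 2), ?_, (Nat.ordProj_mul_ordCompl_eq_self n 2).symm⟩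
  have := Nat.not_dvd_ordCompl Nat.prime_two hn
  rw [Nat.odd_iff]; omega

/-- Every nonzero integer splits as a power of two times an odd part. -/
lemma int_two_decomp {n : ℤ} (hn : n ≠ 0) :
    ∃ (e : ℕ) (m : ℤ), Odd m ∧ n = 2 ^ e * m := by
  obtain ⟨m, hm, hdec⟩ := nat_two_decomp (n := n.natAbs) (Int.natAbs_ne_zero.mpr hn)
  have hmZ : Odd (m : ℤ) := by exact_mod_cast hm
  rcases Int.natAbs_eq n with h | h
  · exact ⟨n.natAbs.factorization 2, (m : ℤ), hmZ, by rw [h]; exact_mod_cast hdec⟩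
  · refine ⟨n.natAbs.factorization 2, -(m : ℤ), hmZ.neg, ?_⟩
    have hdec' : ((n.natAbs : ℤ)) = 2 ^ (n.natAbs.factorization 2) * (m : ℤ) := by
      exact_mod_cast hdec
    conv_lhs => rw [h]
    rw [hdec']; ring

/-- Uniqueness of the power-of-two / odd-part decomposition in ℤ. -/
lemma two_pow_mul_odd_inj : ∀ (i : ℕ) {j : ℕ} {p q : ℤ}, Odd p → Odd q →
    2 ^ i * p = 2 ^ j * q → i = j ∧ p = q := by
  intro i
  induction i with
  | zero =>
    intro j p q hp hq h
    cases j with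
    | zero => refine ⟨rfl, by simpa using h⟩
    | succ j =>
      exfalso
      have hev : Even p := ⟨2 ^ j * q, by rw [pow_zero, one_mul] at h; rw [h]; ring⟩
      exact (Int.not_odd_iff_even.mpr hev) hp
  | succ i ih =>
    intro j p q hp hq h
    cases j with
    | zero =>
      exfalso
      have hev : Even q := ⟨2 ^ i * p, by rw [pow_zero, one_mul] at h; rw [← h]; ring⟩
      exact (Int.not_odd_iff_even.mpr hev) hq
    | succ j =>
      have h' : (2:ℤ) * (2 ^ i * p) = 2 * (2 ^ j * q) := by
        rw [show (2:ℤ) * (2 ^ i * p) = 2 ^ (i+1) * p by ring,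
            show (2:ℤ) * (2 ^ j * q) = 2 ^ (j+1) * q by ring]
        exact h
      obtain ⟨hij, hpq⟩ := ih hp hq (mul_left_cancel₀ two_ne_zero h')
      exact ⟨by omega, hpq⟩

/-- The square of an odd integer is 1 in `ZMod 8`. -/
lemma odd_sq_zmod8 {n : ℤ} (h : Odd n) : ((n : ZMod 8)) ^ 2 = 1 := by
  obtain ⟨k, rfl⟩ := h
  obtain ⟨m, hm⟩ := Int.even_mul_succ_self k
  have key : (2 * k + 1) ^ 2 = 8 * m + 1 := by linear_combination 4 * hm
  calc ((2 * k + 1 : ℤ) : ZMod 8) ^ 2 = ((8 * m + 1 : ℤ) : ZMod 8) := by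
        rw [← Int.cast_pow, key]
    _ = 1 := by
        push_cast
        rw [show ((8 : ZMod 8)) = 0 from by decide]
        ring

theorem stmt17 (a b c : ℤ) (ha : a % 4 = 2) (hb : Odd b)
    (hsq : ∃ k : ℤ, a * b * (a + b) * c = k ^ 2) :
    ∃ (r : ℕ) (col : ℕ → Fin r),
      ¬ ∃ x y z : ℕ, 0 < x ∧ 0 < y ∧ 0 < z ∧ x ≠ y ∧ col x = col y ∧
        a * (x : ℤ) ^ 2 + b * (y : ℤ) ^ 2 = c * (z : ℤ) ^ 2 := by
  refine ⟨2, fun n => ⟨n.factorization 2 % 2, by omega⟩, ?_⟩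
  rintro ⟨x, y, z, hx, hy, hz, hxy, hcol, heq⟩
  -- decompose a = 2 * a' with a' odd
  obtain ⟨a', rfl⟩ : ∃ a', a = 2 * a' := ⟨a / 2, by omega⟩
  have ha' : Odd a' := by rw [Int.odd_iff]; omega
  have hbodd : b % 2 = 1 := Int.odd_iff.mp hb
  -- color information
  have hst : x.factorization 2 % 2 = y.factorization 2 % 2 := by
    simpa using congrArg Fin.val hcol
  -- decompose x and y
  obtain ⟨u, hu, hxu⟩ := nat_two_decomp hx.ne'
  obtain ⟨w, hw, hyw⟩ := nat_two_decomp hy.ne'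
  set s := x.factorization 2 with hs
  set t := y.factorization 2 with ht
  have hU : Odd (u : ℤ) := by exact_mod_cast hu
  have hW : Odd (w : ℤ) := by exact_mod_cast hw
  have hxz : (x : ℤ) = 2 ^ s * (u : ℤ) := by exact_mod_cast hxu
  have hyz : (y : ℤ) = 2 ^ t * (w : ℤ) := by exact_mod_cast hyw
  rw [hxz, hyz] at heq
  by_cases hc : c = 0
  · -- c = 0 : left side is never zero (2-adic valuations of the two terms differ)
    rw [hc] at heq
    have key : (2:ℤ) ^ (2 * s + 1) * (a' * (u:ℤ) ^ 2) = 2 ^ (2 * t) * (-(b * (w:ℤ) ^ 2)) := by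
      linear_combination heq
    have := two_pow_mul_odd_inj (2 * s + 1) (ha'.mul (hU.pow)) ((hb.mul (hW.pow)).neg) key
    omega
  · -- c ≠ 0 : decompose c = 2 ^ v * c' with c' odd
    obtain ⟨v, c', hc', rfl⟩ := int_two_decomp hc
    -- analyze the square hypothesis
    obtain ⟨k, hk⟩ := hsq
    have ha0 : (2 * a') ≠ 0 := by intro h0; omega
    have hb0 : b ≠ 0 := by intro h0; omega
    have hab0 : 2 * a' + b ≠ 0 := by intro h0; omega
    have hc'0 : c' ≠ 0 := by
      rintro rfl
      exact absurd (Int.odd_iff.mp hc') (by norm_num)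
    have hprod : (2 * a') * b * (2 * a' + b) * (2 ^ v * c') ≠ 0 :=
      mul_ne_zero (mul_ne_zero (mul_ne_zero ha0 hb0) hab0)
        (mul_ne_zero (pow_ne_zero _ two_ne_zero) hc'0)
    have hk0 : k ≠ 0 := by
      intro h0
      apply hprod
      rw [hk, h0]; ring
    obtain ⟨g, k₀, hk₀, rfl⟩ := int_two_decomp hk0
    have hkey : (2:ℤ) ^ (v + 1) * (a' * b * (2 * a' + b) * c') = 2 ^ (2 * g) * (k₀ ^ 2) := by
      linear_combination hk
    have hKodd : Odd (a' * b * (2 * a' + b) * c') := by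
      exact (((ha'.mul hb).mul (Even.add_odd ⟨a', by ring⟩ hb)).mul hc')
    obtain ⟨hvg, E2⟩ := two_pow_mul_odd_inj (v + 1) hKodd (hk₀.pow) hkey
    -- so v is odd
    have hvodd : v % 2 = 1 := by omega
    -- decompose z
    obtain ⟨m, hm, hzm⟩ := nat_two_decomp hz.ne'
    set e := z.factorization 2 with he
    have hM : Odd (m : ℤ) := by exact_mod_cast hm
    have hzz : (z : ℤ) = 2 ^ e * (m : ℤ) := by exact_mod_cast hzm
    rw [hzz] at heq
    rcases le_or_gt t s with hts | hts
    · -- s ≥ t : valuation of LHS is 2t, even, but RHS valuation is odd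
      obtain ⟨d, hd⟩ : ∃ d, s = t + d := ⟨s - t, by omega⟩
      rw [hd] at heq
      have key : (2:ℤ) ^ (2 * t) * (2 ^ (2 * d + 1) * (a' * (u:ℤ) ^ 2) + b * (w:ℤ) ^ 2)
          = 2 ^ (v + 2 * e) * (c' * (m:ℤ) ^ 2) := by
        linear_combination heq
      have hoddL : Odd (2 ^ (2 * d + 1) * (a' * (u:ℤ) ^ 2) + b * (w:ℤ) ^ 2) :=
        Even.add_odd ⟨2 ^ (2 * d) * (a' * (u:ℤ) ^ 2), by ring⟩ (hb.mul (hW.pow))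
      have := two_pow_mul_odd_inj (2 * t) hoddL (hc'.mul (hM.pow)) key
      omega
    · -- s < t : since s ≡ t (mod 2), t = s + 2d + 2
      obtain ⟨d, hd⟩ : ∃ d, t = s + 2 * d + 2 := ⟨(t - s - 2) / 2, by omega⟩
      rw [hd] at heq
      have key : (2:ℤ) ^ (2 * s + 1) * (a' * (u:ℤ) ^ 2 + 2 ^ (4 * d + 3) * (b * (w:ℤ) ^ 2))
          = 2 ^ (v + 2 * e) * (c' * (m:ℤ) ^ 2) := by
        linear_combination heq
      have hoddL : Odd (a' * (u:ℤ) ^ 2 + 2 ^ (4 * d + 3) * (b * (w:ℤ) ^ 2)) :=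
        Odd.add_even (ha'.mul (hU.pow)) ⟨2 ^ (4 * d + 2) * (b * (w:ℤ) ^ 2), by ring⟩
      obtain ⟨-, E1⟩ := two_pow_mul_odd_inj (2 * s + 1) hoddL (hc'.mul (hM.pow)) key
      -- pass to ZMod 8
      have hU8 : ((u : ZMod 8)) ^ 2 = 1 := by
        have := odd_sq_zmod8 hU; push_cast at this ⊢; exact this
      have hM8 : ((m : ZMod 8)) ^ 2 = 1 := by
        have := odd_sq_zmod8 hM; push_cast at this ⊢; exact this
      have hA2 : ((a' : ZMod 8)) ^ 2 = 1 := odd_sq_zmod8 ha'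
      have hB2 : ((b : ZMod 8)) ^ 2 = 1 := odd_sq_zmod8 hb
      have hK8 : ((k₀ : ZMod 8)) ^ 2 = 1 := odd_sq_zmod8 hk₀
      have h23 : ((2 : ZMod 8)) ^ (4 * d + 3) = 0 := by
        rw [pow_add, show ((2:ZMod 8)) ^ 3 = 0 from by decide, mul_zero]
      have E1' := congrArg (fun z : ℤ => (z : ZMod 8)) E1
      push_cast at E1'
      rw [h23, hU8, hM8] at E1'
      have hAC : (a' : ZMod 8) = (c' : ZMod 8) := by
        simpa using E1'
      have E2' := congrArg (fun z : ℤ => (z : ZMod 8)) E2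
      push_cast at E2'
      rw [hK8, ← hAC] at E2'
      -- E2' : A * B * (2A + B) * A = 1 with A^2 = 1, B^2 = 1 forces 2 = 0 in ZMod 8
      have : (2 : ZMod 8) = 0 := by
        linear_combination ((a' : ZMod 8) * (b : ZMod 8)) * E2'
          - (2 * (a' : ZMod 8) ^ 4 + (a' : ZMod 8) ^ 3 * (b : ZMod 8)) * hB2
          - (2 * ((a' : ZMod 8) ^ 2 + 1) + (a' : ZMod 8) * (b : ZMod 8)) * hA2
      exact absurd this (by decide)
end

section
/- Let a, b, c ∈ ℤ with a and b odd, c ≡ 2 (mod 4), and ab(a+b)c a nonzero perfect square. If the equation a x^2 + b y^2 = c z^2 is partition regular with respect to (x, y), then ab ≡ 1 (mod 8). -/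
lemma aux_pow2 (i j : ℕ) (p q : ℤ) (hp : Odd p) (hq : Odd q)
    (h : 2 ^ i * p = 2 ^ j * q) : i = j ∧ p = q := by
  have key : ∀ (i j : ℕ) (p q : ℤ), Odd p → Odd q → i ≤ j →
      2 ^ i * p = 2 ^ j * q → i = j ∧ p = q := by
    intro i j p q hp hq hij h
    obtain ⟨d, rfl⟩ := Nat.exists_eq_add_of_le hij
    rw [pow_add, mul_assoc] at h
    have h2 : p = 2 ^ d * q := mul_left_cancel₀ (pow_ne_zero i (two_ne_zero)) h
    have hd : d = 0 := by
      by_contra hd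
      have h3 : (2 : ℤ) ∣ p := h2 ▸ (dvd_pow_self (2 : ℤ) hd).mul_right q
      obtain ⟨t, ht⟩ := h3
      obtain ⟨k, hk⟩ := hp
      omega
    subst hd
    simp only [pow_zero, one_mul] at h2
    exact ⟨by omega, h2⟩
  rcases le_total i j with hij | hij
  · exact key i j p q hp hq hij h
  · obtain ⟨h1, h2⟩ := key j i q p hq hp hij h.symm
    exact ⟨h1.symm, h2.symm⟩

lemma extract_two : ∀ (k : ℕ) (n : ℤ), n.natAbs = k → n ≠ 0 →
    ∃ (s : ℕ) (m : ℤ), Odd m ∧ n = 2 ^ s * m := by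
  intro k
  induction k using Nat.strong_induction_on with
  | _ k ih =>
    intro n hk hn
    rcases Int.even_or_odd n with he | ho
    · obtain ⟨t, ht⟩ := he
      have ht' : n = 2 * t := by omega
      have htne : t ≠ 0 := by
        intro h; rw [h, mul_zero] at ht'; exact hn ht'
      have hlt : t.natAbs < k := by
        have h5 : n.natAbs = 2 * t.natAbs := by
          rw [ht', Int.natAbs_mul]
          norm_num
        omega
      obtain ⟨s, m, hm, hrec⟩ := ih t.natAbs hlt t rfl htne
      exact ⟨s + 1, m, hm, by rw [ht', hrec]; ring⟩
    · exact ⟨0, n, ho, by ring⟩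

lemma odd_sq_mod8 (t : ℤ) (h : Odd t) : t ^ 2 % 8 = 1 := by
  obtain ⟨k, rfl⟩ := h
  obtain ⟨m, hm⟩ := Int.even_mul_succ_self k
  have : (2 * k + 1) ^ 2 = 8 * m + 1 := by linear_combination 4 * hm
  omega

lemma decomp2 (n : ℕ) (hn : n ≠ 0) :
    (n : ℤ) = 2 ^ (n.factorization 2) * ((n / 2 ^ (n.factorization 2) : ℕ) : ℤ) ∧
      Odd (((n / 2 ^ (n.factorization 2) : ℕ)) : ℤ) := by
  constructor
  · have h := Nat.ordProj_mul_ordCompl_eq_self n 2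
    exact_mod_cast h.symm
  · have h2 := Nat.not_dvd_ordCompl Nat.prime_two hn
    have h3 : (n / 2 ^ (n.factorization 2)) % 2 = 1 := by
      rcases Nat.mod_two_eq_zero_or_one (n / 2 ^ (n.factorization 2)) with h | h
      · exact absurd (Nat.dvd_of_mod_eq_zero h) h2
      · exact h
    have : Odd (n / 2 ^ (n.factorization 2)) := Nat.odd_iff.mpr h3
    obtain ⟨t, ht⟩ := this
    exact ⟨t, by exact_mod_cast ht⟩

theorem stmt18 (a b c : ℤ) (ha : Odd a) (hb : Odd b) (hc : c % 4 = 2)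
    (hne : a * b * (a + b) * c ≠ 0) (hsq : ∃ k : ℤ, a * b * (a + b) * c = k ^ 2)
    (hPR : ∀ (r : ℕ) (col : ℕ → Fin r),
      ∃ x y z : ℕ, 0 < x ∧ 0 < y ∧ 0 < z ∧ x ≠ y ∧ col x = col y ∧
        a * (x : ℤ) ^ 2 + b * (y : ℤ) ^ 2 = c * (z : ℤ) ^ 2) :
    a * b % 8 = 1 := by
  -- c = 2 * c' with c' odd
  obtain ⟨q, hq⟩ : ∃ q, c = 2 * (2 * q + 1) := ⟨c / 4, by omega⟩
  set c' : ℤ := 2 * q + 1 with hc'def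
  have hc'odd : Odd c' := ⟨q, by ring⟩
  -- a + b = 2^s * m with m odd
  have habne : a + b ≠ 0 := by
    intro h
    apply hne
    rw [h]; ring
  obtain ⟨s, m, hmodd, hab⟩ := extract_two (a + b).natAbs (a + b) rfl habne
  -- apply partition regularity with coloring by odd part mod 2^(s+3)
  have hrpos : 0 < 2 ^ (s + 3) := Nat.pow_pos (by norm_num)
  obtain ⟨x, y, z, hx, hy, hz, -, hcol, heq⟩ := hPR (2 ^ (s + 3))
    (fun n => ⟨(n / 2 ^ (n.factorization 2)) % 2 ^ (s + 3), Nat.mod_lt _ hrpos⟩)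
  have hcc : (x / 2 ^ (x.factorization 2)) % 2 ^ (s + 3)
      = (y / 2 ^ (y.factorization 2)) % 2 ^ (s + 3) := by
    have := congrArg Fin.val hcol
    simpa using this
  obtain ⟨hxeq, huodd⟩ := decomp2 x hx.ne'
  obtain ⟨hyeq, hvodd⟩ := decomp2 y hy.ne'
  obtain ⟨hzeq, hwodd⟩ := decomp2 z hz.ne'
  rw [hxeq, hyeq, hzeq, hq] at heq
  -- congruence of odd parts
  have hmodc : (((x / 2 ^ (x.factorization 2) : ℕ) : ℤ)) % (2 ^ (s + 3))
      = (((y / 2 ^ (y.factorization 2) : ℕ) : ℤ)) % (2 ^ (s + 3)) := by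
    exact_mod_cast congrArg (Nat.cast : ℕ → ℤ) hcc
  have hdvduv : (2 : ℤ) ^ (s + 3)
      ∣ (((y / 2 ^ (y.factorization 2) : ℕ) : ℤ) - ((x / 2 ^ (x.factorization 2) : ℕ) : ℤ)) :=
    Int.ModEq.dvd hmodc
  clear hmodc hcc hcol hxeq hyeq hzeq
  generalize (x / 2 ^ (x.factorization 2) : ℕ) = u at huodd hdvduv heq
  generalize (y / 2 ^ (y.factorization 2) : ℕ) = v at hvodd hdvduv heq
  generalize (z / 2 ^ (z.factorization 2) : ℕ) = w at hwodd heq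
  generalize x.factorization 2 = α at heq
  generalize y.factorization 2 = β at heq
  generalize z.factorization 2 = γ at heq
  -- α = β
  have hαβ : α = β := by
    rcases lt_trichotomy α β with h | h | h
    · exfalso
      obtain ⟨d, rfl⟩ := Nat.exists_eq_add_of_lt h
      have key : (2 : ℤ) ^ (2 * α) * (a * (u : ℤ) ^ 2 + 2 ^ (2 * (d + 1)) * (b * (v : ℤ) ^ 2))
          = 2 ^ (2 * γ + 1) * (c' * (w : ℤ) ^ 2) := by
        linear_combination heq
      have ho1 : Odd (a * (u : ℤ) ^ 2 + 2 ^ (2 * (d + 1)) * (b * (v : ℤ) ^ 2)) :=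
        (ha.mul (huodd.pow)).add_even ⟨2 ^ (2 * d + 1) * (b * (v : ℤ) ^ 2), by ring⟩
      have ho2 : Odd (c' * (w : ℤ) ^ 2) := hc'odd.mul (hwodd.pow)
      obtain ⟨h1, -⟩ := aux_pow2 _ _ _ _ ho1 ho2 key
      omega
    · exact h
    · exfalso
      obtain ⟨d, rfl⟩ := Nat.exists_eq_add_of_lt h
      have key : (2 : ℤ) ^ (2 * β) * (b * (v : ℤ) ^ 2 + 2 ^ (2 * (d + 1)) * (a * (u : ℤ) ^ 2))
          = 2 ^ (2 * γ + 1) * (c' * (w : ℤ) ^ 2) := by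
        linear_combination heq
      have ho1 : Odd (b * (v : ℤ) ^ 2 + 2 ^ (2 * (d + 1)) * (a * (u : ℤ) ^ 2)) :=
        (hb.mul (hvodd.pow)).add_even ⟨2 ^ (2 * d + 1) * (a * (u : ℤ) ^ 2), by ring⟩
      have ho2 : Odd (c' * (w : ℤ) ^ 2) := hc'odd.mul (hwodd.pow)
      obtain ⟨h1, -⟩ := aux_pow2 _ _ _ _ ho1 ho2 key
      omega
  rw [← hαβ] at heq
  -- divisibility for the difference of squares
  have hdvd16 : (2 : ℤ) ^ (s + 4) ∣ (b * (v : ℤ) ^ 2 - b * (u : ℤ) ^ 2) := by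
    have h2 : (2 : ℤ) ∣ ((v : ℤ) + (u : ℤ)) := by
      obtain ⟨p, hp⟩ := hvodd
      obtain ⟨r, hr⟩ := huodd
      exact ⟨p + r + 1, by omega⟩
    have h3 : (2 : ℤ) ^ (s + 3) * 2 ∣ ((v : ℤ) - (u : ℤ)) * ((v : ℤ) + (u : ℤ)) :=
      mul_dvd_mul hdvduv h2
    have h4 : ((2 : ℤ) ^ (s + 4)) ∣ ((v : ℤ) - (u : ℤ)) * ((v : ℤ) + (u : ℤ)) := by
      have : (2 : ℤ) ^ (s + 4) = 2 ^ (s + 3) * 2 := by ring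
      rw [this]; exact h3
    obtain ⟨R, hR⟩ := h4
    exact ⟨R * b, by linear_combination b * hR⟩
  obtain ⟨R, hR⟩ := hdvd16
  -- the key factored equation
  have hE : (2 : ℤ) ^ (2 * α + s) * (m * (u : ℤ) ^ 2 + 16 * R)
      = 2 ^ (2 * γ + 1) * (c' * (w : ℤ) ^ 2) := by
    linear_combination heq - (2 : ℤ) ^ (2 * α) * hR - (u : ℤ) ^ 2 * (2 : ℤ) ^ (2 * α) * hab
  have hEodd : Odd (m * (u : ℤ) ^ 2 + 16 * R) :=
    (hmodd.mul (huodd.pow)).add_even ⟨8 * R, by ring⟩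
  have hc'w : Odd (c' * (w : ℤ) ^ 2) := hc'odd.mul (hwodd.pow)
  obtain ⟨-, hEq⟩ := aux_pow2 _ _ _ _ hEodd hc'w hE
  -- m ≡ c' mod 8
  have hu8 : (u : ℤ) ^ 2 % 8 = 1 := odd_sq_mod8 _ huodd
  have hw8 : (w : ℤ) ^ 2 % 8 = 1 := odd_sq_mod8 _ hwodd
  obtain ⟨p, hp⟩ : ∃ p, (u : ℤ) ^ 2 = 8 * p + 1 := ⟨(u : ℤ) ^ 2 / 8, by omega⟩
  obtain ⟨p', hp'⟩ : ∃ p', (w : ℤ) ^ 2 = 8 * p' + 1 := ⟨(w : ℤ) ^ 2 / 8, by omega⟩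
  have h8 : (8 : ℤ) ∣ m - c' := by
    refine ⟨c' * p' - m * p - 2 * R, ?_⟩
    linear_combination hEq - m * hp + c' * hp'
  -- the perfect square condition
  obtain ⟨k, hk⟩ := hsq
  have hkne : k ≠ 0 := by
    intro h
    rw [h] at hk
    exact hne (by rw [hk]; ring)
  obtain ⟨κ, k', hk'odd, hkeq⟩ := extract_two k.natAbs k rfl hkne
  rw [hab, hq, hkeq] at hk
  have hsq2 : (2 : ℤ) ^ (s + 1) * (a * b * m * c') = 2 ^ (2 * κ) * (k' ^ 2) := by
    linear_combination hk
  have hoddabmc : Odd (a * b * m * c') := ((ha.mul hb).mul hmodd).mul hc'odd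
  have hoddk' : Odd (k' ^ 2) := hk'odd.pow
  obtain ⟨-, habmc⟩ := aux_pow2 _ _ _ _ hoddabmc hoddk' hsq2
  have hk8 : k' ^ 2 % 8 = 1 := odd_sq_mod8 _ hk'odd
  have hc8 : c' ^ 2 % 8 = 1 := odd_sq_mod8 _ hc'odd
  have h1 : (a * b * m * c') % 8 = 1 := by rw [habmc]; exact hk8
  obtain ⟨d8, hd8⟩ := h8
  obtain ⟨t, ht⟩ : ∃ t, c' ^ 2 = 8 * t + 1 := ⟨c' ^ 2 / 8, by omega⟩
  have hfin : a * b * m * c' = a * b + 8 * (a * b * t + a * b * c' * d8) := by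
    linear_combination a * b * c' * hd8 + a * b * ht
  omega
end

section
/- Let F₁ and F₂ be disjoint finite subsets of ℙ ∪ {−1}, where ℙ is the set of prime numbers. Then there exists an odd prime p, not dividing any element of F₁ ∪ F₂, such that every element of F₁ is a quadratic residue modulo p and every element of F₂ is a quadratic non-residue modulo p. -/
theorem stmt19 (F₁ F₂ : Finset ℤ)
    (h1 : ∀ x ∈ F₁, x = -1 ∨ ∃ p : ℕ, p.Prime ∧ x = (p : ℤ))
    (h2 : ∀ x ∈ F₂, x = -1 ∨ ∃ p : ℕ, p.Prime ∧ x = (p : ℤ))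
    (hdisj : Disjoint F₁ F₂) :
    ∃ p : ℕ, p.Prime ∧ Odd p ∧
      (∀ x ∈ F₁ ∪ F₂, ¬ (p : ℤ) ∣ x) ∧
      (∀ x ∈ F₁, ∃ y : ZMod p, y ^ 2 = (x : ZMod p)) ∧
      (∀ x ∈ F₂, ¬ ∃ y : ZMod p, y ^ 2 = (x : ZMod p)) := by
  classical
  -- the residue we want mod 8
  set r8 : ℕ := if (-1 : ℤ) ∈ F₂ then (if (2 : ℤ) ∈ F₂ then 3 else 7)
      else (if (2 : ℤ) ∈ F₂ then 5 else 1) with hr8_def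
  -- the sign we want for legendreSym q p (for odd primes q in the sets)
  set s : ℕ → ℤ := fun q =>
      (if (q : ℤ) ∈ F₁ then 1 else -1) *
      (if ((-1 : ℤ) ∈ F₂) ∧ q % 4 = 3 then -1 else 1) with hs_def
  have hs_pm : ∀ q, s q = 1 ∨ s q = -1 := by
    intro q
    simp only [hs_def]
    split_ifs <;> norm_num
  -- the odd primes occurring in F₁ ∪ F₂
  set S : Finset ℕ := ((F₁ ∪ F₂).image Int.toNat).filter (fun q => q.Prime ∧ q ≠ 2)
    with hS_def
  have hS_prime : ∀ q ∈ S, q.Prime ∧ q ≠ 2 := by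
    intro q hq
    exact (Finset.mem_filter.mp hq).2
  have h8S : (8 : ℕ) ∉ S := by
    intro h
    have := (hS_prime 8 h).1
    norm_num at this
  set T : Finset ℕ := insert 8 S with hT_def
  -- choose targets mod each odd prime q ∈ S
  have hchoice : ∀ q ∈ S, ∃ a : ZMod q, IsUnit a ∧ (IsSquare a ↔ s q = 1) := by
    intro q hq
    obtain ⟨hqp, hq2⟩ := hS_prime q hq
    haveI : Fact q.Prime := ⟨hqp⟩
    have hchar : ringChar (ZMod q) ≠ 2 := by
      rw [ZMod.ringChar_zmod_n]; exact hq2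
    rcases hs_pm q with h | h
    · exact ⟨1, isUnit_one, by simp [h]⟩
    · obtain ⟨b, hb⟩ := FiniteField.exists_nonsquare hchar
      have hb0 : b ≠ 0 := by
        intro h0
        exact hb ⟨0, by rw [h0, mul_zero]⟩
      refine ⟨b, hb0.isUnit, ?_⟩
      rw [h]
      simp only [hb]
      norm_num
  choose aa haa using hchoice
  -- the target residue function
  set f : ∀ i : {x // x ∈ T}, ZMod (i : ℕ) := fun i =>
    if h : (i : ℕ) ∈ S then aa (i : ℕ) h else ((r8 : ℕ) : ZMod (i : ℕ)) with hf_def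
  -- pairwise coprimality
  have copr : Pairwise (Function.onFun Nat.Coprime fun i : {x // x ∈ T} => (i : ℕ)) := by
    intro i j hij
    have hij' : (i : ℕ) ≠ (j : ℕ) := fun h => hij (Subtype.ext h)
    have hmem : ∀ k : {x // x ∈ T}, (k : ℕ) = 8 ∨ ((k : ℕ).Prime ∧ (k : ℕ) ≠ 2) := by
      intro k
      rcases Finset.mem_insert.mp k.2 with h | h
      · exact Or.inl h
      · exact Or.inr (hS_prime _ h)
    have cop8 : ∀ m : ℕ, m.Prime → m ≠ 2 → Nat.Coprime 8 m := by
      intro m hm hm2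
      have : Nat.Coprime 2 m := (Nat.coprime_primes Nat.prime_two hm).mpr (Ne.symm hm2)
      have : Nat.Coprime (2 ^ 3) m := Nat.Coprime.pow_left 3 this
      simpa using this
    show Nat.Coprime (i : ℕ) (j : ℕ)
    rcases hmem i with hi | hi <;> rcases hmem j with hj | hj
    · exact absurd (hi.trans hj.symm) hij'
    · rw [hi]; exact cop8 _ hj.1 hj.2
    · rw [hj]; exact (cop8 _ hi.1 hi.2).symm
    · exact (Nat.coprime_primes hi.1 hj.1).mpr hij'
  -- the modulus
  set N : ℕ := ∏ i : {x // x ∈ T}, (i : ℕ) with hN_def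
  haveI : NeZero N := by
    constructor
    have : 0 < N := by
      apply Finset.prod_pos
      intro i _
      rcases Finset.mem_insert.mp i.2 with h | h
      · rw [h]; norm_num
      · exact (hS_prime _ h).1.pos
    omega
  set e := ZMod.prodEquivPi (fun i : {x // x ∈ T} => (i : ℕ)) copr with he_def
  set a : ZMod N := e.symm f with ha_def
  have haunit : IsUnit a := by
    have hfunit : IsUnit f := by
      have hu : ∀ i : {x // x ∈ T}, IsUnit (f i) := by
        intro i
        simp only [hf_def]
        split_ifs with h
        · exact (haa _ h).1
        · have h8 : (i : ℕ) = 8 := by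
            rcases Finset.mem_insert.mp i.2 with h' | h'
            · exact h'
            · exact absurd h' h
          rcases i with ⟨v, hv⟩
          simp only at h8
          subst h8
          show IsUnit ((r8 : ℕ) : ZMod 8)
          have : r8 = 3 ∨ r8 = 7 ∨ r8 = 5 ∨ r8 = 1 := by
            simp only [hr8_def]; split_ifs <;> simp
          rcases this with h | h | h | h <;> rw [h] <;> decide
      choose u hu' using hu
      refine ⟨⟨f, fun i => ↑(u i)⁻¹, ?_, ?_⟩, rfl⟩ <;>
        · funext i
          simp only [Pi.mul_apply, Pi.one_apply, ← hu' i]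
          simp
    exact hfunit.map e.symm
  -- Dirichlet
  obtain ⟨p, hpgt, hp, hpa⟩ := Nat.forall_exists_prime_gt_and_eq_mod haunit 1
  haveI : Fact p.Prime := ⟨hp⟩
  -- extract the congruences
  have hmod : ∀ i : {x // x ∈ T}, (p : ZMod (i : ℕ)) = f i := by
    intro i
    have h1' : e ((p : ℕ) : ZMod N) = f := by rw [hpa, ha_def, RingEquiv.apply_symm_apply]
    have h2' : e ((p : ℕ) : ZMod N) i = ((p : ℕ) : ZMod (i : ℕ)) := by
      rw [map_natCast e p]
      exact Pi.natCast_apply _ _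
    rw [← h2', h1']
  -- residue mod 8
  have h8T : (8 : ℕ) ∈ T := Finset.mem_insert_self 8 S
  have hp8 : p % 8 = r8 := by
    have := hmod ⟨8, h8T⟩
    simp only [hf_def] at this
    rw [dif_neg h8S] at this
    have h' : p % 8 = r8 % 8 := (ZMod.natCast_eq_natCast_iff p r8 8).mp this
    have : r8 < 8 := by simp only [hr8_def]; split_ifs <;> norm_num
    omega
  have hr8odd : r8 % 2 = 1 := by simp only [hr8_def]; split_ifs <;> norm_num
  have hpodd : p % 2 = 1 := by
    have : p % 2 = p % 8 % 2 := (Nat.mod_mod_of_dvd p (by norm_num)).symm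
    omega
  have hp2 : p ≠ 2 := by omega
  have hp4 : p % 4 = (if (-1 : ℤ) ∈ F₂ then 3 else 1) := by
    have h48 : p % 4 = p % 8 % 4 := (Nat.mod_mod_of_dvd p (by norm_num)).symm
    rw [h48, hp8, hr8_def]
    split_ifs <;> norm_num
  -- residues mod odd primes q ∈ S
  have hqS : ∀ q (hq : q ∈ S), IsUnit ((p : ℕ) : ZMod q) ∧
      (IsSquare ((p : ℕ) : ZMod q) ↔ s q = 1) := by
    intro q hq
    have := hmod ⟨q, Finset.mem_insert_of_mem hq⟩
    simp only [hf_def] at this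
    rw [dif_pos hq] at this
    rw [this]
    exact ⟨(haa q hq).1, (haa q hq).2⟩
  -- the key claim
  have main : ∀ x ∈ F₁ ∪ F₂, ¬ (p : ℤ) ∣ x ∧
      ((∃ y : ZMod p, y ^ 2 = (x : ZMod p)) ↔ x ∈ F₁) := by
    intro x hx
    have hsq_iff : ∀ z : ZMod p, (∃ y : ZMod p, y ^ 2 = z) ↔ IsSquare z := by
      intro z
      constructor
      · rintro ⟨y, hy⟩; exact ⟨y, by rw [← hy, sq]⟩
      · rintro ⟨y, hy⟩; exact ⟨y, by rw [hy, sq]⟩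
    have hxc : x = -1 ∨ ∃ q : ℕ, q.Prime ∧ x = (q : ℤ) := by
      rcases Finset.mem_union.mp hx with h | h
      · exact h1 x h
      · exact h2 x h
    rcases hxc with rfl | ⟨q, hqp, rfl⟩
    · -- x = -1
      constructor
      · intro hdvd
        rw [dvd_neg] at hdvd
        have h1' := Int.eq_one_of_dvd_one (by positivity) hdvd
        have h1'' : p = 1 := by exact_mod_cast h1'
        have := hp.one_lt
        omega
      · have hcast : ((-1 : ℤ) : ZMod p) = -1 := by push_cast; ring
        rw [hcast, hsq_iff, ZMod.exists_sq_eq_neg_one_iff]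
        by_cases hmem : (-1 : ℤ) ∈ F₂
        · rw [hp4, if_pos hmem]
          constructor
          · intro h; exact absurd rfl h
          · intro h; exact (Finset.disjoint_left.mp hdisj h hmem).elim
        · rw [hp4, if_neg hmem]
          have hmem1 : (-1 : ℤ) ∈ F₁ := by
            rcases Finset.mem_union.mp hx with h | h
            · exact h
            · exact absurd h hmem
          simp [hmem1]
    · -- x = q, a prime
      by_cases hq2 : q = 2
      · subst hq2
        constructor
        · intro hdvd
          rw [Int.natCast_dvd_natCast] at hdvd
          have := (Nat.prime_dvd_prime_iff_eq hp Nat.prime_two).mp hdvd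
          exact hp2 this
        · have hcast : (((2 : ℕ) : ℤ) : ZMod p) = 2 := by push_cast; ring
          rw [hcast, hsq_iff, ZMod.exists_sq_eq_two_iff hp2, hp8]
          by_cases hmem : (2 : ℤ) ∈ F₂
          · simp only [hr8_def, hmem, if_true]
            have hn1 : ((2 : ℕ) : ℤ) ∉ F₁ := by
              intro h
              exact Finset.disjoint_left.mp hdisj h (by exact_mod_cast hmem)
            constructor
            · intro h; split_ifs at h <;> omega
            · intro h; exact absurd h hn1
          · have hmem1 : ((2 : ℕ) : ℤ) ∈ F₁ := by
              rcases Finset.mem_union.mp hx with h | h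
              · exact h
              · exact absurd (by exact_mod_cast h) hmem
            simp only [hr8_def, hmem, if_false, hmem1, iff_true]
            split_ifs <;> norm_num
      · -- q an odd prime
        haveI : Fact q.Prime := ⟨hqp⟩
        have hqS' : q ∈ S := by
          rw [hS_def, Finset.mem_filter]
          refine ⟨Finset.mem_image.mpr ⟨(q : ℤ), hx, by simp⟩, hqp, hq2⟩
        obtain ⟨hu, hchar⟩ := hqS q hqS'
        have hpq : p ≠ q := by
          intro h
          rw [h, ZMod.natCast_self] at hu
          exact not_isUnit_zero hu
        have hndvd : ¬ (p : ℤ) ∣ (q : ℤ) := by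
          rw [Int.natCast_dvd_natCast]
          intro h
          exact hpq ((Nat.prime_dvd_prime_iff_eq hp hqp).mp h)
        have hne0 : (((q : ℕ) : ℤ) : ZMod p) ≠ 0 := by
          rw [Ne, ZMod.intCast_zmod_eq_zero_iff_dvd]
          exact hndvd
        -- legendreSym q p = s q
        have hqodd : q % 2 = 1 := (Nat.Prime.eq_two_or_odd hqp).resolve_left hq2
        have hqp0 : ¬ (q : ℤ) ∣ (p : ℤ) := by
          rw [Int.natCast_dvd_natCast]
          intro h
          exact hpq ((Nat.prime_dvd_prime_iff_eq hqp hp).mp h).symm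
        have hqpne0 : (((p : ℕ) : ℤ) : ZMod q) ≠ 0 := by
          rw [Ne, ZMod.intCast_zmod_eq_zero_iff_dvd]
          exact hqp0
        have hsq_p : IsSquare (((p : ℕ) : ℤ) : ZMod q) ↔ s q = 1 := by
          rw [show ((((p : ℕ) : ℤ)) : ZMod q) = ((p : ℕ) : ZMod q) by push_cast; rfl, hchar]
        have hlqp : legendreSym q (p : ℤ) = s q := by
          rcases hs_pm q with h | h
          · rw [h, legendreSym.eq_one_iff q hqpne0, hsq_p, h]
          · rw [h, legendreSym.eq_neg_one_iff q, hsq_p, h]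
            norm_num
        -- quadratic reciprocity
        have hlpq : legendreSym p (q : ℤ) = (if (q : ℤ) ∈ F₁ then 1 else -1) := by
          by_cases hb : (-1 : ℤ) ∈ F₂
          · have hp43 : p % 4 = 3 := by rw [hp4, if_pos hb]
            by_cases h4 : q % 4 = 3
            · have hrec := legendreSym.quadratic_reciprocity_three_mod_four hp43 h4
              have : legendreSym p (q : ℤ) = - legendreSym q (p : ℤ) := by
                rw [hrec]; ring
              rw [this, hlqp, hs_def]
              simp only [if_pos (And.intro hb h4)]
              ring
            · have h41 : q % 4 = 1 := by omega
              have hrec := legendreSym.quadratic_reciprocity_one_mod_four h41 hp2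
              rw [hrec, hlqp, hs_def]
              simp only [if_neg (fun h : _ ∧ _ => h4 h.2)]
              ring
          · have hp41 : p % 4 = 1 := by rw [hp4, if_neg hb]
            have hrec := legendreSym.quadratic_reciprocity_one_mod_four hp41 hq2
            rw [← hrec, hlqp, hs_def]
            simp only [if_neg (fun h : _ ∧ _ => hb h.1)]
            ring
        constructor
        · exact hndvd
        · rw [hsq_iff]
          rw [← legendreSym.eq_one_iff p hne0]
          rw [hlpq]
          split_ifs with hmem <;> simp [hmem]
  refine ⟨p, hp, Nat.odd_iff.mpr hpodd, ?_, ?_, ?_⟩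
  · intro x hx; exact (main x hx).1
  · intro x hx
    exact ((main x (Finset.mem_union_left _ hx)).2).mpr hx
  · intro x hx h
    have hx1 : x ∉ F₁ := fun h1' => Finset.disjoint_left.mp hdisj h1' hx
    exact hx1 (((main x (Finset.mem_union_right _ hx)).2).mp h)
end
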